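/- For L > 0 let pD(L,t,x,y) := (2/L)·∑_{k=1}^∞ e^{-k²π²t/L²}·sin(kπx/L)·sin(kπy/L). Then for every real J > 0, setting L = π/J, for every t > 0 and all real numbers x, y, y' one has |pD(L,t,x,y) − pD(L,t,x,y')| ≤ (2/π)·(J² + 1/(2t))·e^{-J² t}·|y − y'|. -/

import Mathlib

open Real

/-- The Dirichlet heat kernel on the interval `[0,L]`,
`pD(L,t,x,y) = (2/L)·∑_{k=1}^∞ e^{-k²π²t/L²}·sin(kπx/L)·sin(kπy/L)`. -/
noncomputable def dirichletHeatKernel (L t x y : ℝ) : ℝ :=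
  (2 / L) * ∑' k : ℕ, Real.exp (-((k : ℝ) + 1) ^ 2 * π ^ 2 * t / L ^ 2) *
    Real.sin (((k : ℝ) + 1) * π * x / L) * Real.sin (((k : ℝ) + 1) * π * y / L)

private lemma two_mul_le_exp_sub (u : ℝ) (hu : 0 ≤ u) :
    2 * u ≤ Real.exp u - Real.exp (-u) := by
  rcases eq_or_lt_of_le hu with h | h
  · simp [← h]
  · have h2 : u < Real.sinh u := Real.self_lt_sinh_iff.mpr h
    rw [Real.sinh_eq] at h2
    linarith

private lemma abs_sin_sub_sin_le (A B : ℝ) : |Real.sin A - Real.sin B| ≤ |A - B| := by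
  rw [Real.sin_sub_sin]
  calc |2 * Real.sin ((A - B) / 2) * Real.cos ((A + B) / 2)|
      = 2 * |Real.sin ((A - B) / 2)| * |Real.cos ((A + B) / 2)| := by
        rw [abs_mul, abs_mul]; norm_num
    _ ≤ 2 * |(A - B) / 2| * 1 :=
        mul_le_mul (mul_le_mul le_rfl Real.abs_sin_le_abs (abs_nonneg _) (by norm_num))
          (Real.abs_cos_le_one _) (abs_nonneg _) (by positivity)
    _ = |A - B| := by rw [abs_div, abs_two]; ring

private lemma summable_aux (a : ℝ) (ha : 0 < a) :
    Summable (fun k : ℕ => ((k : ℝ) + 1) * Real.exp (-((k : ℝ) + 1) ^ 2 * a)) := by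
  have hr : ‖Real.exp (-a)‖ < 1 := by
    rw [Real.norm_eq_abs, abs_of_pos (Real.exp_pos _)]
    exact Real.exp_lt_one_iff.mpr (by linarith)
  have h1 : Summable (fun n : ℕ => (n : ℝ) ^ 1 * Real.exp (-a) ^ n) :=
    summable_pow_mul_geometric_of_norm_lt_one 1 hr
  have h2 : Summable (fun n : ℕ => (n : ℝ) * Real.exp (-(n : ℝ) * a)) := by
    refine h1.congr fun n => ?_
    rw [pow_one]
    congr 1
    rw [← Real.exp_nat_mul]
    congr 1
    ring
  have h3 : Summable (fun k : ℕ => ((k : ℝ) + 1) * Real.exp (-((k : ℝ) + 1) * a)) := by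
    have h := (summable_nat_add_iff
      (f := fun n : ℕ => (n : ℝ) * Real.exp (-(n : ℝ) * a)) 1).2 h2
    refine h.congr fun n => ?_
    push_cast
    ring_nf
  refine Summable.of_nonneg_of_le (fun k => by positivity) (fun k => ?_) h3
  have hk : ((k : ℝ) + 1) ≤ ((k : ℝ) + 1) ^ 2 := by
    nlinarith [Nat.cast_nonneg (α := ℝ) k]
  have hle : -((k : ℝ) + 1) ^ 2 * a ≤ -((k : ℝ) + 1) * a := by nlinarith
  exact mul_le_mul_of_nonneg_left (Real.exp_le_exp.2 hle) (by positivity)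

private noncomputable def gAux (a : ℝ) (n : ℕ) : ℝ :=
  Real.exp (-a * (((n : ℝ) + 2) ^ 2 - ((n : ℝ) + 2)))

private lemma term_le (a : ℝ) (ha : 0 < a) (k : ℕ) :
    (((k + 1 : ℕ) : ℝ) + 1) * Real.exp (-(((k + 1 : ℕ) : ℝ) + 1) ^ 2 * a) ≤
      1 / (2 * a) * (gAux a k - gAux a (k + 1)) := by
  have hcast : (((k + 1 : ℕ) : ℝ) + 1) = (k : ℝ) + 2 := by push_cast; ring
  rw [hcast]
  have hgk : gAux a k = Real.exp (-a * ((k : ℝ) + 2) ^ 2) * Real.exp (a * ((k : ℝ) + 2)) := by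
    rw [gAux, ← Real.exp_add]
    congr 1
    ring
  have hgk1 : gAux a (k + 1)
      = Real.exp (-a * ((k : ℝ) + 2) ^ 2) * Real.exp (-(a * ((k : ℝ) + 2))) := by
    rw [gAux, ← Real.exp_add]
    congr 1
    push_cast
    ring
  have hsinh : 2 * (a * ((k : ℝ) + 2)) ≤
      Real.exp (a * ((k : ℝ) + 2)) - Real.exp (-(a * ((k : ℝ) + 2))) :=
    two_mul_le_exp_sub _ (by positivity)
  have key : Real.exp (-a * ((k : ℝ) + 2) ^ 2) * (2 * (a * ((k : ℝ) + 2))) ≤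
      Real.exp (-a * ((k : ℝ) + 2) ^ 2) *
        (Real.exp (a * ((k : ℝ) + 2)) - Real.exp (-(a * ((k : ℝ) + 2)))) :=
    mul_le_mul_of_nonneg_left hsinh (Real.exp_pos _).le
  rw [hgk, hgk1, ← mul_sub, show -((k : ℝ) + 2) ^ 2 * a = -a * ((k : ℝ) + 2) ^ 2 from by ring,
    div_mul_eq_mul_div, le_div_iff₀ (by positivity : (0:ℝ) < 2 * a)]
  have heq : ((k : ℝ) + 2) * Real.exp (-a * ((k : ℝ) + 2) ^ 2) * (2 * a)
      = Real.exp (-a * ((k : ℝ) + 2) ^ 2) * (2 * (a * ((k : ℝ) + 2))) := by ring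
  linarith [key]

private lemma tsum_bound (a : ℝ) (ha : 0 < a) :
    ∑' k : ℕ, ((k : ℝ) + 1) * Real.exp (-((k : ℝ) + 1) ^ 2 * a) ≤
      (1 + 1 / (2 * a)) * Real.exp (-a) := by
  have hs := summable_aux a ha
  rw [Summable.tsum_eq_zero_add hs]
  have hfirst : (((0 : ℕ) : ℝ) + 1) * Real.exp (-(((0 : ℕ) : ℝ) + 1) ^ 2 * a)
      = Real.exp (-a) := by norm_num
  have hg0 : gAux a 0 = Real.exp (-(2 * a)) := by
    rw [gAux]
    norm_num
    ring_nf
  have htail : ∑' k : ℕ, (((k + 1 : ℕ) : ℝ) + 1) *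
      Real.exp (-(((k + 1 : ℕ) : ℝ) + 1) ^ 2 * a) ≤ 1 / (2 * a) * Real.exp (-a) := by
    have hpart : ∀ n : ℕ, ∑ k ∈ Finset.range n, (((k + 1 : ℕ) : ℝ) + 1) *
        Real.exp (-(((k + 1 : ℕ) : ℝ) + 1) ^ 2 * a) ≤ 1 / (2 * a) * Real.exp (-(2 * a)) := by
      intro n
      calc ∑ k ∈ Finset.range n, (((k + 1 : ℕ) : ℝ) + 1) *
            Real.exp (-(((k + 1 : ℕ) : ℝ) + 1) ^ 2 * a)
          ≤ ∑ k ∈ Finset.range n, 1 / (2 * a) * (gAux a k - gAux a (k + 1)) :=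
            Finset.sum_le_sum fun k _ => term_le a ha k
        _ = 1 / (2 * a) * (gAux a 0 - gAux a n) := by
            rw [← Finset.mul_sum, Finset.sum_range_sub' (gAux a) n]
        _ ≤ 1 / (2 * a) * gAux a 0 := by
            have h1 : 0 ≤ gAux a n := (Real.exp_pos _).le
            have h2a : 0 ≤ 1 / (2 * a) := by positivity
            nlinarith
        _ = 1 / (2 * a) * Real.exp (-(2 * a)) := by rw [hg0]
    have h := Real.tsum_le_of_sum_range_le (fun n => by positivity) hpart
    refine h.trans ?_
    have hm := mul_le_mul_of_nonneg_left
      (Real.exp_le_exp.2 (by linarith : -(2 * a) ≤ -a))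
      (by positivity : (0:ℝ) ≤ 1 / (2 * a))
    linarith
  rw [hfirst, show (1 + 1 / (2 * a)) * Real.exp (-a)
    = Real.exp (-a) + 1 / (2 * a) * Real.exp (-a) from by ring]
  exact add_le_add le_rfl htail

/-- Lipschitz estimate for the Dirichlet interval heat kernel: for every `J > 0`,
with `L = π/J`, every `t > 0` and all `x, y, y' ∈ ℝ`,
`|pD(L,t,x,y) − pD(L,t,x,y')| ≤ (2/π)·(J² + 1/(2t))·e^{-J² t}·|y − y'|`. -/
theorem dirichletHeatKernel_lipschitz (J t x y y' : ℝ) (hJ : 0 < J) (ht : 0 < t) :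
    |dirichletHeatKernel (π / J) t x y - dirichletHeatKernel (π / J) t x y'| ≤
      (2 / π) * (J ^ 2 + 1 / (2 * t)) * Real.exp (-J ^ 2 * t) * |y - y'| := by
  have hπ : (0:ℝ) < π := Real.pi_pos
  have ha : 0 < J ^ 2 * t := by positivity
  set F : ℝ → ℕ → ℝ := fun z k => Real.exp (-((k : ℝ) + 1) ^ 2 * (J ^ 2 * t)) *
      Real.sin (((k : ℝ) + 1) * J * x) * Real.sin (((k : ℝ) + 1) * J * z) with hF
  have hker : ∀ z : ℝ, dirichletHeatKernel (π / J) t x z = 2 * J / π * ∑' k : ℕ, F z k := by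
    intro z
    rw [dirichletHeatKernel]
    congr 1
    · field_simp
    · refine tsum_congr fun k => ?_
      rw [hF]
      have h1 : -((k : ℝ) + 1) ^ 2 * π ^ 2 * t / (π / J) ^ 2
          = -((k : ℝ) + 1) ^ 2 * (J ^ 2 * t) := by
        field_simp
      have h2 : ∀ w : ℝ, ((k : ℝ) + 1) * π * w / (π / J) = ((k : ℝ) + 1) * J * w := by
        intro w
        field_simp
      rw [h1, h2, h2]
  have hB := summable_aux (J ^ 2 * t) ha
  have hFabs : ∀ z k, |F z k| ≤ ((k : ℝ) + 1) * Real.exp (-((k : ℝ) + 1) ^ 2 * (J ^ 2 * t)) := by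
    intro z k
    rw [hF]
    have h1 : (1:ℝ) ≤ (k : ℝ) + 1 := by linarith [Nat.cast_nonneg (α := ℝ) k]
    calc |Real.exp (-((k : ℝ) + 1) ^ 2 * (J ^ 2 * t)) *
          Real.sin (((k : ℝ) + 1) * J * x) * Real.sin (((k : ℝ) + 1) * J * z)|
        = Real.exp (-((k : ℝ) + 1) ^ 2 * (J ^ 2 * t)) *
          |Real.sin (((k : ℝ) + 1) * J * x)| * |Real.sin (((k : ℝ) + 1) * J * z)| := by
          rw [abs_mul, abs_mul, abs_of_pos (Real.exp_pos _)]
      _ ≤ Real.exp (-((k : ℝ) + 1) ^ 2 * (J ^ 2 * t)) * 1 * 1 := by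
          refine mul_le_mul (mul_le_mul le_rfl (Real.abs_sin_le_one _) (abs_nonneg _)
            (Real.exp_pos _).le) (Real.abs_sin_le_one _) (abs_nonneg _) (by positivity)
      _ ≤ ((k : ℝ) + 1) * Real.exp (-((k : ℝ) + 1) ^ 2 * (J ^ 2 * t)) := by
          rw [mul_one, mul_one]
          nlinarith [Real.exp_pos (-((k : ℝ) + 1) ^ 2 * (J ^ 2 * t))]
  have hFs : ∀ z, Summable (F z) := fun z =>
    Summable.of_abs (Summable.of_nonneg_of_le (fun k => abs_nonneg _) (hFabs z) hB)
  have hbound : ∀ k, |F y k - F y' k| ≤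
      ((k : ℝ) + 1) * Real.exp (-((k : ℝ) + 1) ^ 2 * (J ^ 2 * t)) * (J * |y - y'|) := by
    intro k
    have e0 : (0:ℝ) < Real.exp (-((k : ℝ) + 1) ^ 2 * (J ^ 2 * t)) := Real.exp_pos _
    have hsin : |Real.sin (((k : ℝ) + 1) * J * y) - Real.sin (((k : ℝ) + 1) * J * y')|
        ≤ ((k : ℝ) + 1) * J * |y - y'| := by
      refine (_root_.abs_sin_sub_sin_le _ _).trans ?_
      rw [show ((k : ℝ) + 1) * J * y - ((k : ℝ) + 1) * J * y'
        = ((k : ℝ) + 1) * J * (y - y') from by ring, abs_mul,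
        abs_of_nonneg (by positivity : (0:ℝ) ≤ ((k : ℝ) + 1) * J)]
    calc |F y k - F y' k|
        = Real.exp (-((k : ℝ) + 1) ^ 2 * (J ^ 2 * t)) * |Real.sin (((k : ℝ) + 1) * J * x)| *
          |Real.sin (((k : ℝ) + 1) * J * y) - Real.sin (((k : ℝ) + 1) * J * y')| := by
          rw [hF]
          dsimp only
          rw [show Real.exp (-((k : ℝ) + 1) ^ 2 * (J ^ 2 * t)) *
              Real.sin (((k : ℝ) + 1) * J * x) * Real.sin (((k : ℝ) + 1) * J * y) -
              Real.exp (-((k : ℝ) + 1) ^ 2 * (J ^ 2 * t)) *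
              Real.sin (((k : ℝ) + 1) * J * x) * Real.sin (((k : ℝ) + 1) * J * y')
            = Real.exp (-((k : ℝ) + 1) ^ 2 * (J ^ 2 * t)) * Real.sin (((k : ℝ) + 1) * J * x) *
              (Real.sin (((k : ℝ) + 1) * J * y) - Real.sin (((k : ℝ) + 1) * J * y'))
            from by ring, abs_mul, abs_mul, abs_of_pos e0]
      _ ≤ Real.exp (-((k : ℝ) + 1) ^ 2 * (J ^ 2 * t)) * 1 * (((k : ℝ) + 1) * J * |y - y'|) := by
          refine mul_le_mul (mul_le_mul le_rfl (Real.abs_sin_le_one _) (abs_nonneg _) e0.le)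
            hsin (abs_nonneg _) (by positivity)
      _ = ((k : ℝ) + 1) * Real.exp (-((k : ℝ) + 1) ^ 2 * (J ^ 2 * t)) * (J * |y - y'|) := by
          ring
  have hBmul : Summable (fun k : ℕ =>
      ((k : ℝ) + 1) * Real.exp (-((k : ℝ) + 1) ^ 2 * (J ^ 2 * t)) * (J * |y - y'|)) :=
    hB.mul_right _
  have habs : Summable (fun k => |F y k - F y' k|) :=
    Summable.of_nonneg_of_le (fun k => abs_nonneg _) hbound hBmul
  rw [hker y, hker y', ← mul_sub, abs_mul, abs_of_pos (by positivity : (0:ℝ) < 2 * J / π),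
    ← Summable.tsum_sub (hFs y) (hFs y')]
  have step1 : |∑' k, (F y k - F y' k)| ≤ ∑' k, |F y k - F y' k| := by
    simpa [Real.norm_eq_abs] using
      norm_tsum_le_tsum_norm (f := fun k => F y k - F y' k)
        (by simpa [Real.norm_eq_abs] using habs)
  have step2 : ∑' k, |F y k - F y' k| ≤
      (∑' k : ℕ, ((k : ℝ) + 1) * Real.exp (-((k : ℝ) + 1) ^ 2 * (J ^ 2 * t))) * (J * |y - y'|) := by
    rw [← tsum_mul_right]
    exact Summable.tsum_le_tsum hbound habs hBmul
  have step3 : (∑' k : ℕ, ((k : ℝ) + 1) * Real.exp (-((k : ℝ) + 1) ^ 2 * (J ^ 2 * t)))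
      * (J * |y - y'|) ≤
      (1 + 1 / (2 * (J ^ 2 * t))) * Real.exp (-(J ^ 2 * t)) * (J * |y - y'|) :=
    mul_le_mul_of_nonneg_right (tsum_bound _ ha) (by positivity)
  have chain : |∑' k, (F y k - F y' k)| ≤
      (1 + 1 / (2 * (J ^ 2 * t))) * Real.exp (-(J ^ 2 * t)) * (J * |y - y'|) :=
    step1.trans (step2.trans step3)
  have final : 2 * J / π * ((1 + 1 / (2 * (J ^ 2 * t))) * Real.exp (-(J ^ 2 * t)) * (J * |y - y'|))
      = 2 / π * (J ^ 2 + 1 / (2 * t)) * Real.exp (-J ^ 2 * t) * |y - y'| := by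
    rw [show -J ^ 2 * t = -(J ^ 2 * t) from by ring]
    field_simp
  calc 2 * J / π * |∑' k, (F y k - F y' k)|
      ≤ 2 * J / π * ((1 + 1 / (2 * (J ^ 2 * t))) * Real.exp (-(J ^ 2 * t)) * (J * |y - y'|)) :=
        mul_le_mul_of_nonneg_left chain (by positivity)
    _ = 2 / π * (J ^ 2 + 1 / (2 * t)) * Real.exp (-J ^ 2 * t) * |y - y'| := final
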